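/- arXiv:1507.05947 — 3 statements merged into one kernel-verified Lean document; each statement's English description precedes it below -/
import Mathlib

section
/- For s > 0 and λ ∈ ℂ with Re(λ²) > 0, ∫_s^∞ ∫₀^∞ e^{-t w²} λ e^{-t λ²} dt dw + ∫_{-s}^∞ ∫₀^∞ e^{-t w²} λ e^{-t λ²} dt dw = ∫₀^∞ (√π/√t) λ e^{-t λ²} dt = π λ (λ²)^{-1/2}, which equals π if Re(λ) > 0 and -π if Re(λ) < 0. -/
open MeasureTheory Set Complex

lemma aux_exp_norm (z : ℂ) (t : ℝ) : ‖Complex.exp (-(z * t))‖ = Real.exp (-(z.re * t)) := by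
  rw [Complex.norm_exp]
  congr 1
  simp [Complex.mul_re]

lemma aux_int_exp {z : ℂ} (hz : 0 < z.re) :
    IntegrableOn (fun t : ℝ => Complex.exp (-(z * t))) (Set.Ioi 0) := by
  have h1 : IntegrableOn (fun t : ℝ => Real.exp (-(z.re * t))) (Set.Ioi 0) := by
    simpa [neg_mul] using exp_neg_integrableOn_Ioi (a := 0) hz
  refine h1.mono' ?_ ?_
  · exact (Complex.continuous_exp.comp ((continuous_const.mul Complex.continuous_ofReal).neg)).aestronglyMeasurable
  · filter_upwards with t
    rw [aux_exp_norm]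

lemma aux_norm_int {z : ℂ} (hz : 0 < z.re) :
    (∫ t in Set.Ioi (0:ℝ), ‖Complex.exp (-(z * t))‖) = (z.re)⁻¹ := by
  simp_rw [aux_exp_norm]
  have := integral_comp_mul_left_Ioi (fun x : ℝ => Real.exp (-x)) 0 hz
  simp only [mul_zero, smul_eq_mul] at this
  rw [this, integral_exp_neg_Ioi_zero, mul_one]

lemma aux_cpow_real_mul {r : ℝ} (hr : 0 < r) {z : ℂ} (hz : z ≠ 0) (c : ℂ) :
    ((r : ℂ) * z) ^ c = (r : ℂ) ^ c * z ^ c := by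
  have hr' : (r : ℂ) ≠ 0 := Complex.ofReal_ne_zero.mpr hr.ne'
  rw [Complex.cpow_def_of_ne_zero (mul_ne_zero hr' hz), Complex.log_ofReal_mul hr hz,
    Complex.cpow_def_of_ne_zero hr', Complex.cpow_def_of_ne_zero hz,
    ← Complex.exp_add, Complex.ofReal_log hr.le, add_mul]

/-- For s > 0 and Re(λ²) > 0, the sum of the two iterated integrals over (s,∞) and (-s,∞)
equals ∫₀^∞ (√π/√t) λ e^{-tλ²} dt = πλ(λ²)^{-1/2}, which is π if Re λ > 0 and -π if Re λ < 0. -/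
theorem stmt7 (s : ℝ) (hs : 0 < s) (lam : ℂ) (hlam : 0 < (lam ^ 2).re) :
    ((∫ w in Set.Ioi s, ∫ t in Set.Ioi (0:ℝ),
        Complex.exp (-(t:ℂ) * (w:ℂ) ^ 2) * lam * Complex.exp (-(t:ℂ) * lam ^ 2)) +
     (∫ w in Set.Ioi (-s), ∫ t in Set.Ioi (0:ℝ),
        Complex.exp (-(t:ℂ) * (w:ℂ) ^ 2) * lam * Complex.exp (-(t:ℂ) * lam ^ 2))
      = ∫ t in Set.Ioi (0:ℝ),
          ((Real.sqrt Real.pi / Real.sqrt t : ℝ) : ℂ) * lam * Complex.exp (-(t:ℂ) * lam ^ 2)) ∧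
    ((∫ t in Set.Ioi (0:ℝ),
        ((Real.sqrt Real.pi / Real.sqrt t : ℝ) : ℂ) * lam * Complex.exp (-(t:ℂ) * lam ^ 2))
      = (Real.pi : ℂ) * lam * (lam ^ 2) ^ (-(1:ℂ)/2)) ∧
    (0 < lam.re → (Real.pi : ℂ) * lam * (lam ^ 2) ^ (-(1:ℂ)/2) = (Real.pi : ℂ)) ∧
    (lam.re < 0 → (Real.pi : ℂ) * lam * (lam ^ 2) ^ (-(1:ℂ)/2) = -(Real.pi : ℂ)) := by
  refine ⟨?_, ?_⟩
  ·
    set F : ℝ → ℝ → ℂ := fun w t =>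
      Complex.exp (-(t:ℂ) * (w:ℂ) ^ 2) * lam * Complex.exp (-(t:ℂ) * lam ^ 2) with hF
    have hFeq : ∀ w t : ℝ, F w t = lam * Complex.exp (-((((w:ℝ):ℂ) ^ 2 + lam ^ 2) * t)) := by
      intro w t
      rw [hF]
      simp only
      rw [mul_right_comm, ← Complex.exp_add, mul_comm]
      congr 2
      ring
    have hre : ∀ w : ℝ, 0 < (((w:ℂ) ^ 2 + lam ^ 2)).re := by
      intro w
      have : ((w:ℂ) ^ 2 + lam ^ 2).re = w ^ 2 + (lam ^ 2).re := by
        simp [Complex.add_re, ← Complex.ofReal_pow]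
      rw [this]
      positivity
    -- pointwise integrability in t
    have hint : ∀ w : ℝ, IntegrableOn (fun t => F w t) (Set.Ioi 0) := by
      intro w
      have h0 : IntegrableOn (fun t : ℝ => lam * Complex.exp (-((((w:ℝ):ℂ) ^ 2 + lam ^ 2) * t)))
          (Set.Ioi 0) := (aux_int_exp (hre w)).const_mul lam
      exact h0.congr_fun (fun t _ => (hFeq w t).symm) measurableSet_Ioi
    -- norm integral value
    have hnormint : ∀ w : ℝ, (∫ t in Set.Ioi (0:ℝ), ‖F w t‖)
        = ‖lam‖ * (w ^ 2 + (lam ^ 2).re)⁻¹ := by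
      intro w
      have h1 : ∀ t : ℝ, ‖F w t‖ = ‖lam‖ * ‖Complex.exp (-((((w:ℝ):ℂ) ^ 2 + lam ^ 2) * t))‖ := by
        intro t; rw [hFeq w t, norm_mul]
      simp_rw [h1]
      rw [integral_const_mul, aux_norm_int (hre w)]
      congr 2
      simp [Complex.add_re, ← Complex.ofReal_pow]
    -- product integrability
    have hprod : Integrable (fun p : ℝ × ℝ => F p.1 p.2)
        ((volume : Measure ℝ).prod ((volume : Measure ℝ).restrict (Set.Ioi 0))) := by
      have hmeas : AEStronglyMeasurable (fun p : ℝ × ℝ => F p.1 p.2)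
          ((volume : Measure ℝ).prod ((volume : Measure ℝ).restrict (Set.Ioi 0))) := by
        apply Continuous.aestronglyMeasurable
        rw [hF]
        apply Continuous.mul
        apply Continuous.mul
        · exact Complex.continuous_exp.comp
            (((Complex.continuous_ofReal.comp continuous_snd).neg).mul
              ((Complex.continuous_ofReal.comp continuous_fst).pow 2))
        · exact continuous_const
        · exact Complex.continuous_exp.comp
            (((Complex.continuous_ofReal.comp continuous_snd).neg).mul continuous_const)
      rw [integrable_prod_iff hmeas]
      constructor
      · exact Filter.Eventually.of_forall fun w => hint w
      · have hbd : Integrable (fun w : ℝ => ‖lam‖ * (w ^ 2 + (lam ^ 2).re)⁻¹) := by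
          set m := min 1 (lam ^ 2).re with hm
          have hm0 : 0 < m := lt_min one_pos hlam
          have hmaj : Integrable (fun w : ℝ => ‖lam‖ * m⁻¹ * (1 + w ^ 2)⁻¹) :=
            integrable_inv_one_add_sq.const_mul _
          refine hmaj.mono' ?_ ?_
          · refine Continuous.aestronglyMeasurable (Continuous.mul continuous_const ?_)
            exact ((continuous_pow 2).add continuous_const).inv₀
              (fun w => (add_pos_of_nonneg_of_pos (sq_nonneg w) hlam).ne')
          · filter_upwards with w
            have h2 : (0:ℝ) < w ^ 2 + (lam ^ 2).re := by positivity
            have habs : |‖lam‖ * (w ^ 2 + (lam ^ 2).re)⁻¹| = ‖lam‖ * (w ^ 2 + (lam ^ 2).re)⁻¹ :=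
              abs_of_nonneg (by positivity)
            rw [Real.norm_eq_abs, habs, mul_assoc]
            refine mul_le_mul_of_nonneg_left ?_ (norm_nonneg lam)
            rw [← mul_inv]
            refine inv_anti₀ (by positivity) ?_
            have h3 : m ≤ (lam ^ 2).re := min_le_right _ _
            have h4 : m ≤ 1 := min_le_left _ _
            nlinarith [sq_nonneg w]
        refine hbd.congr ?_
        filter_upwards with w
        rw [hnormint w]
    -- the inner-integral function
    set g : ℝ → ℂ := fun w => ∫ t in Set.Ioi (0:ℝ), F w t with hg
    have hgint : Integrable g := hprod.integral_prod_left
    have heven : ∀ w : ℝ, g (-w) = g w := by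
      intro w
      rw [hg]
      simp only
      congr 1
      funext t
      rw [hF]
      push_cast
      ring_nf
    -- step B: reflect
    have hB : (∫ w in Set.Ioi (-s), g w) = ∫ w in Set.Iic s, g w := by
      have := integral_comp_neg_Ioi (-s) g
      rw [neg_neg] at this
      rw [← this]
      exact setIntegral_congr_fun measurableSet_Ioi fun w _ => (heven w).symm
    -- step C: add up
    have hC : (∫ w in Set.Ioi s, g w) + (∫ w in Set.Ioi (-s), g w) = ∫ w : ℝ, g w := by
      rw [hB, add_comm]
      exact intervalIntegral.integral_Iic_add_Ioi hgint.integrableOn hgint.integrableOn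
    -- step D: Fubini
    have hD : (∫ w : ℝ, g w) = ∫ t in Set.Ioi (0:ℝ), ∫ w : ℝ, F w t := by
      exact MeasureTheory.integral_integral_swap hprod
    -- step E: gaussian
    have hE : ∀ t ∈ Set.Ioi (0:ℝ), (∫ w : ℝ, F w t)
        = ((Real.sqrt Real.pi / Real.sqrt t : ℝ) : ℂ) * lam * Complex.exp (-(t:ℂ) * lam ^ 2) := by
      intro t ht
      have h1 : ∀ w : ℝ, F w t
          = ((Real.exp (-(t * w ^ 2)) : ℝ) : ℂ) * (lam * Complex.exp (-(t:ℂ) * lam ^ 2)) := by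
        intro w
        rw [hF]
        simp only
        rw [mul_assoc]
        congr 1
        rw [Complex.ofReal_exp]
        congr 1
        push_cast
        ring
      simp_rw [h1]
      rw [integral_mul_const]
      have h2 : (∫ w : ℝ, ((Real.exp (-(t * w ^ 2)) : ℝ) : ℂ))
          = ((∫ w : ℝ, Real.exp (-(t * w ^ 2)) : ℝ) : ℂ) := integral_ofReal
      have h3 : (∫ w : ℝ, Real.exp (-(t * w ^ 2))) = Real.sqrt (Real.pi / t) := by
        simpa [neg_mul] using integral_gaussian t
      rw [h2, h3, Real.sqrt_div Real.pi_pos.le]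
      push_cast
      ring
    rw [hC, hD]
    exact setIntegral_congr_fun measurableSet_Ioi hE
  ·
    have hl2 : lam ^ 2 ≠ 0 := fun h => by simp [h] at hlam
    have hlam0 : lam ≠ 0 := fun h => by simp [h] at hlam
    -- the square root W
    set W : ℂ := (lam ^ 2) ^ ((1:ℂ)/2) with hW
    have hW2 : W * W = lam ^ 2 := by
      rw [hW, ← Complex.cpow_add _ _ hl2]
      norm_num
    have hWre : 0 < W.re := by
      rw [hW, Complex.cpow_def_of_ne_zero hl2, Complex.exp_re]
      have him : (Complex.log (lam ^ 2) * ((1:ℂ)/2)).im = (lam ^ 2).arg / 2 := by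
        simp [Complex.mul_im, Complex.log_im]
        ring
      rw [him]
      have harg : |(lam ^ 2).arg| < Real.pi / 2 :=
        Complex.abs_arg_lt_pi_div_two_iff.mpr (Or.inl hlam)
      have hcos : 0 < Real.cos ((lam ^ 2).arg / 2) := by
        apply Real.cos_pos_of_mem_Ioo
        constructor
        · have := abs_lt.mp harg
          linarith [this.1]
        · have := abs_lt.mp harg
          linarith [this.2, Real.pi_pos]
      positivity
    have hWne : W ≠ 0 := fun h => by rw [h] at hWre; simp at hWre
    have hexp : (lam ^ 2) ^ (-(1:ℂ)/2) = W⁻¹ := by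
      rw [neg_div, Complex.cpow_neg, hW]
    refine ⟨?_, ?_, ?_⟩
    · -- the integral
      have hsub := MeasureTheory.integral_comp_rpow_Ioi_of_pos
        (g := fun t : ℝ => ((Real.sqrt Real.pi / Real.sqrt t : ℝ) : ℂ) * lam
          * Complex.exp (-(t:ℂ) * lam ^ 2)) (p := 2) two_pos
      rw [← hsub]
      have hcongr : ∀ x ∈ Set.Ioi (0:ℝ),
          ((2 * x ^ ((2:ℝ) - 1)) • (((Real.sqrt Real.pi / Real.sqrt (x ^ (2:ℝ)) : ℝ) : ℂ) * lam
            * Complex.exp (-((x ^ (2:ℝ) : ℝ):ℂ) * lam ^ 2)))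
          = ((2 * Real.sqrt Real.pi : ℝ) : ℂ) * lam * Complex.exp (-(lam ^ 2) * (x:ℂ) ^ 2) := by
        intro x hx
        have hx0 : 0 < x := hx
        have h1 : x ^ ((2:ℝ) - 1) = x := by norm_num
        have h2 : x ^ ((2:ℝ)) = x ^ 2 := by
          rw [show (2:ℝ) = ((2:ℕ):ℝ) by norm_num, Real.rpow_natCast]
        have h3 : Real.sqrt (x ^ 2) = x := Real.sqrt_sq hx0.le
        rw [h1, h2, h3, real_smul]
        push_cast [Real.sqrt_pos.mpr Real.pi_pos]
        have hxne : (x:ℂ) ≠ 0 := Complex.ofReal_ne_zero.mpr hx0.ne'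
        field_simp
      rw [setIntegral_congr_fun measurableSet_Ioi hcongr]
      simp_rw [mul_assoc]
      rw [MeasureTheory.integral_const_mul, MeasureTheory.integral_const_mul,
        integral_gaussian_complex_Ioi hlam]
      have hargpi : (lam ^ 2).arg ≠ Real.pi := by
        intro h
        have := (Complex.arg_eq_pi_iff.mp h).1
        linarith
      have hsplit : ((Real.pi : ℂ) / lam ^ 2) ^ ((1:ℂ)/2)
          = ((Real.sqrt Real.pi : ℝ) : ℂ) * W⁻¹ := by
        rw [div_eq_mul_inv, aux_cpow_real_mul Real.pi_pos (inv_ne_zero hl2),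
          Complex.inv_cpow _ _ hargpi, ← hW]
        congr 1
        rw [show ((1:ℂ)/2) = (((1/2 : ℝ)):ℂ) by norm_num,
          ← Complex.ofReal_cpow Real.pi_pos.le, Real.sqrt_eq_rpow]
      rw [show ((1:ℂ)/2) = ((1:ℂ)/2) from rfl] at hsplit
      rw [hexp, hsplit]
      have hpp : (↑(Real.sqrt Real.pi) : ℂ) * ↑(Real.sqrt Real.pi) = (Real.pi : ℂ) := by
        rw [← Complex.ofReal_mul, Real.mul_self_sqrt Real.pi_pos.le]
      push_cast
      linear_combination (lam * W⁻¹) * hpp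
    · intro h
      have h0 : (W - lam) * (W + lam) = 0 := by linear_combination hW2
      rcases mul_eq_zero.mp h0 with h1 | h1
      · have hWlam : W = lam := sub_eq_zero.mp h1
        rw [hexp, hWlam]
        field_simp
      · exfalso
        have : W = -lam := eq_neg_of_add_eq_zero_left h1
        rw [this] at hWre
        simp only [Complex.neg_re] at hWre
        linarith
    · intro h
      have h0 : (W - lam) * (W + lam) = 0 := by linear_combination hW2
      rcases mul_eq_zero.mp h0 with h1 | h1
      · exfalso
        have : W = lam := sub_eq_zero.mp h1
        rw [this] at hWre
        linarith
      · have hWlam : W = -lam := eq_neg_of_add_eq_zero_left h1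
        rw [hexp, hWlam, inv_neg, mul_neg, mul_assoc, mul_inv_cancel₀ hlam0, mul_one]
end

section
/- Let (λ_j) be a sequence of complex numbers with multiplicities m_j ∈ ℕ such that the counting function N(c) = Σ_{|λ_j| ≤ c} m_j satisfies N(c) ≤ C₁ c^{d/2} for all c ≥ 1, and suppose Re(λ_j) ≥ c > 0 for all j ≥ N+1. Then Σ_{j > N} m_j e^{-t Re(λ_j)} ≤ K e^{-tc/2} for all t ≥ 1, where K = Σ_{k≥N+1} N(a(k+1)) e^{-k/2} < ∞ for suitable a > 1. -/
open MeasureTheory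

/-- Weyl-law tail estimate: if the eigenvalue counting function satisfies
N(c) ≤ C₁ c^{d/2}, the eigenvalues beyond index N lie in a cone |λ| ≤ a Re λ and have
Re λ_j ≥ c > 0, then Σ_{j>N} m_j e^{-t Re λ_j} ≤ K e^{-tc/2} for t ≥ 1. -/
theorem stmt12 (lam : ℕ → ℂ) (m : ℕ → ℕ) (d : ℕ) (N : ℕ)
    (Ncount : ℝ → ℝ) (C₁ a c : ℝ) (ha : 1 < a) (hc : 0 < c)
    (hcount : ∀ r : ℝ, ∀ F : Finset ℕ, (∀ j ∈ F, ‖lam j‖ ≤ r) →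
      (∑ j ∈ F, (m j : ℝ)) ≤ Ncount r)
    (hN : ∀ r : ℝ, 1 ≤ r → Ncount r ≤ C₁ * r ^ ((d : ℝ) / 2))
    (hre : ∀ j, N < j → c ≤ (lam j).re)
    (hcone : ∀ j, N < j → ‖lam j‖ ≤ a * (lam j).re) :
    ∃ K : ℝ, 0 ≤ K ∧ ∀ t : ℝ, 1 ≤ t →
      (Summable fun j : {j : ℕ // N < j} => (m j.1 : ℝ) * Real.exp (-t * (lam j.1).re)) ∧
      (∑' j : {j : ℕ // N < j}, (m j.1 : ℝ) * Real.exp (-t * (lam j.1).re))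
        ≤ K * Real.exp (-t * c / 2) := by
  have ha0 : (0:ℝ) < a := lt_trans one_pos ha
  have hC₁ : 0 ≤ C₁ := by
    have h0 : (0:ℝ) ≤ Ncount 1 := by simpa using hcount 1 ∅ (by simp)
    have h1 := hN 1 le_rfl
    simp [Real.one_rpow] at h1
    linarith
  set r : ℝ := Real.exp (-(1/2)) with hr
  have hr0 : (0:ℝ) < r := Real.exp_pos _
  have hr1 : r < 1 := by
    rw [hr]; exact Real.exp_lt_one_iff.mpr (by norm_num)
  set g : ℕ → ℝ := fun k => C₁ * a ^ ((d:ℝ)/2) * (((k:ℝ)+1)^d * r^k) with hg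
  have hgnn : ∀ k, 0 ≤ g k := by
    intro k
    have : (0:ℝ) ≤ a ^ ((d:ℝ)/2) := Real.rpow_nonneg ha0.le _
    positivity
  -- Summability of g
  have h1 : Summable (fun n : ℕ => (n:ℝ)^d * r^n) :=
    summable_pow_mul_geometric_of_norm_lt_one d
      (by rwa [Real.norm_eq_abs, abs_of_pos hr0])
  have h2 : Summable (fun n : ℕ => ((n:ℝ)+1)^d * r^(n+1)) := by
    have := (summable_nat_add_iff 1).mpr h1
    refine this.congr fun n => ?_
    push_cast
    ring
  have h3 : Summable (fun n : ℕ => ((n:ℝ)+1)^d * r^n) := by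
    refine (h2.mul_left r⁻¹).congr fun n => ?_
    rw [pow_succ]
    field_simp
  have hgsum : Summable g := h3.mul_left _
  set S : {j : ℕ // N < j} → ℝ :=
    fun j => (m j.1 : ℝ) * Real.exp (-(lam j.1).re/2) with hS
  have hSnn : ∀ j, 0 ≤ S j := fun j => by positivity
  -- floor facts
  have hfloor : ∀ j : {j : ℕ // N < j},
      ((⌊(lam j.1).re⌋₊ : ℝ) ≤ (lam j.1).re ∧ (lam j.1).re < ⌊(lam j.1).re⌋₊ + 1) := by
    intro j
    have hre' : 0 ≤ (lam j.1).re := le_trans hc.le (hre j.1 j.2)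
    exact ⟨Nat.floor_le hre', Nat.lt_floor_add_one _⟩
  -- bound for finite partial sums of S
  have hbound : ∀ F : Finset {j : ℕ // N < j}, ∑ j ∈ F, S j ≤ ∑' k, g k := by
    intro F
    have hkey : ∀ j ∈ F, ⌊(lam j.1).re⌋₊ ∈
        Finset.range ((F.sup fun j => ⌊(lam j.1).re⌋₊) + 1) :=
      fun j hj => Finset.mem_range.mpr (Nat.lt_succ_of_le (Finset.le_sup (f := fun j : {j : ℕ // N < j} => ⌊(lam j.1).re⌋₊) hj))
    rw [← Finset.sum_fiberwise_of_maps_to hkey]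
    refine le_trans (Finset.sum_le_sum ?_) (Summable.sum_le_tsum _ (fun k _ => hgnn k) hgsum)
    intro k _
    set Fk := F.filter (fun j => ⌊(lam j.1).re⌋₊ = k) with hFk
    have hFkmem : ∀ j ∈ Fk, (k:ℝ) ≤ (lam j.1).re ∧ (lam j.1).re < k + 1 := by
      intro j hj
      have h := Finset.mem_filter.mp hj
      have := hfloor j
      rw [h.2] at this
      exact this
    have step1 : ∑ j ∈ Fk, S j ≤ (∑ j ∈ Fk, (m j.1 : ℝ)) * r^k := by
      rw [Finset.sum_mul]
      refine Finset.sum_le_sum fun j hj => ?_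
      have hk := (hFkmem j hj).1
      have : Real.exp (-(lam j.1).re/2) ≤ r^k := by
        rw [hr, ← Real.exp_nat_mul]
        apply Real.exp_le_exp.mpr
        linarith
      exact mul_le_mul_of_nonneg_left this (Nat.cast_nonneg _)
    have step2 : (∑ j ∈ Fk, (m j.1 : ℝ)) ≤ Ncount (a * (k+1)) := by
      have himg : ∑ i ∈ Fk.image Subtype.val, (m i : ℝ) = ∑ j ∈ Fk, (m j.1 : ℝ) :=
        Finset.sum_image (by intro x hx y hy h; exact Subtype.ext h)
      rw [← himg]
      refine hcount _ _ fun i hi => ?_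
      obtain ⟨j, hj, rfl⟩ := Finset.mem_image.mp hi
      have h1 := hcone j.1 j.2
      have h2 := (hFkmem j hj).2
      calc ‖lam j.1‖ ≤ a * (lam j.1).re := h1
        _ ≤ a * (k+1) := by nlinarith
    have step3 : Ncount (a * (k+1)) ≤ C₁ * (a * (k+1)) ^ ((d:ℝ)/2) := by
      apply hN
      have : (1:ℝ) ≤ (k:ℝ) + 1 := by
        have : (0:ℝ) ≤ (k:ℝ) := Nat.cast_nonneg _
        linarith
      nlinarith
    have step4 : (a * ((k:ℝ)+1)) ^ ((d:ℝ)/2) ≤ a ^ ((d:ℝ)/2) * ((k:ℝ)+1)^d := by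
      have hk1 : (1:ℝ) ≤ (k:ℝ) + 1 := by
        have : (0:ℝ) ≤ (k:ℝ) := Nat.cast_nonneg _
        linarith
      rw [Real.mul_rpow ha0.le (by linarith)]
      refine mul_le_mul_of_nonneg_left ?_ (Real.rpow_nonneg ha0.le _)
      calc ((k:ℝ)+1) ^ ((d:ℝ)/2) ≤ ((k:ℝ)+1) ^ (d:ℝ) :=
            Real.rpow_le_rpow_of_exponent_le hk1 (by have : (0:ℝ) ≤ (d:ℝ) := Nat.cast_nonneg d; linarith)
        _ = ((k:ℝ)+1)^d := Real.rpow_natCast _ _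
    calc ∑ j ∈ Fk, S j ≤ (∑ j ∈ Fk, (m j.1 : ℝ)) * r^k := step1
      _ ≤ Ncount (a * (k+1)) * r^k :=
          mul_le_mul_of_nonneg_right step2 (pow_nonneg hr0.le _)
      _ ≤ (C₁ * (a * (k+1)) ^ ((d:ℝ)/2)) * r^k :=
          mul_le_mul_of_nonneg_right step3 (pow_nonneg hr0.le _)
      _ ≤ g k := by
          rw [hg]
          have := mul_le_mul_of_nonneg_left step4 hC₁
          nlinarith [pow_nonneg hr0.le k]
  have hSsum : Summable S := summable_of_sum_le hSnn hbound
  refine ⟨∑' j, S j, tsum_nonneg hSnn, ?_⟩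
  intro t ht
  have hpt : ∀ j : {j : ℕ // N < j},
      (m j.1 : ℝ) * Real.exp (-t * (lam j.1).re) ≤ S j * Real.exp (-t * c / 2) := by
    intro j
    have hRe := hre j.1 j.2
    have hexp : Real.exp (-t * (lam j.1).re) ≤
        Real.exp (-(lam j.1).re/2) * Real.exp (-t * c / 2) := by
      rw [← Real.exp_add]
      apply Real.exp_le_exp.mpr
      nlinarith
    calc (m j.1 : ℝ) * Real.exp (-t * (lam j.1).re)
        ≤ (m j.1 : ℝ) * (Real.exp (-(lam j.1).re/2) * Real.exp (-t * c / 2)) :=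
          mul_le_mul_of_nonneg_left hexp (Nat.cast_nonneg _)
      _ = S j * Real.exp (-t * c / 2) := by rw [hS]; ring
  have hsum2 : Summable (fun j => S j * Real.exp (-t * c / 2)) := hSsum.mul_right _
  have hsum1 : Summable fun j : {j : ℕ // N < j} =>
      (m j.1 : ℝ) * Real.exp (-t * (lam j.1).re) :=
    hsum2.of_nonneg_of_le (fun j => by positivity) hpt
  refine ⟨hsum1, ?_⟩
  calc (∑' j : {j : ℕ // N < j}, (m j.1 : ℝ) * Real.exp (-t * (lam j.1).re))
      ≤ ∑' j, S j * Real.exp (-t * c / 2) := Summable.tsum_le_tsum hpt hsum1 hsum2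
    _ = (∑' j, S j) * Real.exp (-t * c / 2) := tsum_mul_right
end

section
/- Suppose R(s) = ∏_{p=0}^{d-1} S_p(s + μ_p)^{(-1)^p} where each S_p satisfies the functional equation S_p(u)/S_p(-u) = exp(-c ∫₀^u P_p(r) dr) with P_p even polynomials, and Σ_{p} (-1)^p [P_p(s + μ_p) + P_p(s - μ_p)]-type combination f(s) is a constant A. Then R(s)/R(-s) = exp(-c·A·s). -/
private lemma aux_zero16 (G : ℂ → ℂ) (h : ∀ u, HasDerivAt G 0 u) (h0 : G 0 = 0) :
    ∀ u, G u = 0 := by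
  intro u
  have := is_const_of_deriv_eq_zero (f := G)
    (fun x => (h x).differentiableAt) (fun x => (h x).deriv) u 0
  rw [this, h0]

/-- Abstract form of the Ruelle functional equation: if R is an alternating product of
factors S_p(s+μ_p)S_p(s-μ_p), each S_p satisfying S_p(u)/S_p(-u) = exp(-c F_p(u)) with
F_p the odd antiderivative of the even polynomial-like function P_p, and the alternating
sum of shifted P_p's is the constant A, then R(s)/R(-s) = exp(-cAs). -/
theorem stmt16 (d : ℕ) (S : ℕ → ℂ → ℂ) (P F : ℕ → ℂ → ℂ) (μ : ℕ → ℂ)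
    (c A : ℂ) (R : ℂ → ℂ)
    (hSne : ∀ p u, S p u ≠ 0)
    (hF0 : ∀ p, F p 0 = 0)
    (hF : ∀ p u, HasDerivAt (F p) (P p u) u)
    (hPeven : ∀ p u, P p (-u) = P p u)
    (hfe : ∀ p u, S p u / S p (-u) = Complex.exp (-c * F p u))
    (hR : ∀ s, R s = ∏ p ∈ Finset.range d,
      (if Even p then S p (s + μ p) * S p (s - μ p)
        else (S p (s + μ p) * S p (s - μ p))⁻¹))
    (hA : ∀ s, ∑ p ∈ Finset.range d, (-1 : ℂ) ^ p * (P p (s + μ p) + P p (s - μ p)) = A) :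
    ∀ s, R s / R (-s) = Complex.exp (-c * A * s) := by
  -- F is odd
  have hodd : ∀ p u, F p (-u) = -F p u := by
    intro p u
    have key : ∀ v, F p v + F p (-v) = 0 := by
      apply aux_zero16
      · intro v
        have h1 : HasDerivAt (fun w => F p (-w)) (-P p (-v)) v := by
          simpa [Function.comp_def] using (hF p (-v)).comp v (hasDerivAt_neg v)
        have := (hF p v).add h1
        simpa [hPeven p v, Pi.add_def] using this
      · simp [hF0 p]
    have := key u
    linear_combination this
  -- alternating sum of F's equals A * s
  have hg : ∀ s, ∑ p ∈ Finset.range d,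
      (-1 : ℂ) ^ p * (F p (s + μ p) + F p (s - μ p)) = A * s := by
    have key : ∀ s, (∑ p ∈ Finset.range d,
        (-1 : ℂ) ^ p * (F p (s + μ p) + F p (s - μ p))) - A * s = 0 := by
      apply aux_zero16
      · intro s
        have hterm : ∀ p, HasDerivAt
            (fun t => (-1 : ℂ) ^ p * (F p (t + μ p) + F p (t - μ p)))
            ((-1 : ℂ) ^ p * (P p (s + μ p) + P p (s - μ p))) s := by
          intro p
          have h1 : HasDerivAt (fun t : ℂ => F p (t + μ p)) (P p (s + μ p)) s := by
            simpa [Function.comp_def] using (hF p (s + μ p)).comp s ((hasDerivAt_id s).add_const (μ p))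
          have h2 : HasDerivAt (fun t : ℂ => F p (t - μ p)) (P p (s - μ p)) s := by
            simpa [Function.comp_def] using (hF p (s - μ p)).comp s ((hasDerivAt_id s).sub_const (μ p))
          exact (h1.add h2).const_mul _
        have hsum : HasDerivAt (fun t => ∑ p ∈ Finset.range d,
            (-1 : ℂ) ^ p * (F p (t + μ p) + F p (t - μ p)))
            (∑ p ∈ Finset.range d, (-1 : ℂ) ^ p * (P p (s + μ p) + P p (s - μ p))) s :=
          HasDerivAt.fun_sum (fun p _ => hterm p)
        have hlin : HasDerivAt (fun t : ℂ => A * t) A s := by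
          simpa using (hasDerivAt_id s).const_mul A
        have := hsum.sub hlin
        rw [hA s] at this
        simpa [Pi.sub_def] using this
      · simp [hodd, hF0]
    intro s
    linear_combination key s
  intro s
  have hSfe : ∀ p u, S p u = Complex.exp (-c * F p u) * S p (-u) := by
    intro p u
    have := hfe p u
    rw [div_eq_iff (hSne p (-u))] at this
    exact this
  have hkey : ∀ p, S p (s + μ p) * S p (s - μ p)
      = Complex.exp (-c * (F p (s + μ p) + F p (s - μ p)))
        * (S p (-s + μ p) * S p (-s - μ p)) := by
    intro p
    rw [hSfe p (s + μ p), hSfe p (s - μ p), mul_add, Complex.exp_add]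
    have e1 : -(s + μ p) = -s - μ p := by ring
    have e2 : -(s - μ p) = -s + μ p := by ring
    rw [e1, e2]
    ring
  have hfac : ∀ p, (if Even p then S p (s + μ p) * S p (s - μ p)
        else (S p (s + μ p) * S p (s - μ p))⁻¹)
      / (if Even p then S p (-s + μ p) * S p (-s - μ p)
        else (S p (-s + μ p) * S p (-s - μ p))⁻¹)
      = Complex.exp ((-1 : ℂ) ^ p * (-c * (F p (s + μ p) + F p (s - μ p)))) := by
    intro p
    have hne : S p (-s + μ p) * S p (-s - μ p) ≠ 0 := mul_ne_zero (hSne _ _) (hSne _ _)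
    by_cases hp : Even p
    · rw [if_pos hp, if_pos hp, hkey p, mul_div_assoc, div_self hne, mul_one,
        hp.neg_one_pow, one_mul]
    · rw [if_neg hp, if_neg hp, hkey p, mul_inv, div_eq_mul_inv, inv_inv, mul_assoc,
        inv_mul_cancel₀ hne, mul_one, ← Complex.exp_neg,
        (Nat.not_even_iff_odd.mp hp).neg_one_pow]
      ring_nf
  calc R s / R (-s)
      = ∏ p ∈ Finset.range d,
        ((if Even p then S p (s + μ p) * S p (s - μ p)
          else (S p (s + μ p) * S p (s - μ p))⁻¹)
        / (if Even p then S p (-s + μ p) * S p (-s - μ p)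
          else (S p (-s + μ p) * S p (-s - μ p))⁻¹)) := by
        rw [hR s, hR (-s), ← Finset.prod_div_distrib]
    _ = ∏ p ∈ Finset.range d,
        Complex.exp ((-1 : ℂ) ^ p * (-c * (F p (s + μ p) + F p (s - μ p)))) := by
        exact Finset.prod_congr rfl (fun p _ => hfac p)
    _ = Complex.exp (∑ p ∈ Finset.range d,
        (-1 : ℂ) ^ p * (-c * (F p (s + μ p) + F p (s - μ p)))) := by
        rw [Complex.exp_sum]
    _ = Complex.exp (-c * A * s) := by
        congr 1
        have : ∑ p ∈ Finset.range d,
            (-1 : ℂ) ^ p * (-c * (F p (s + μ p) + F p (s - μ p)))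
            = -c * ∑ p ∈ Finset.range d,
              (-1 : ℂ) ^ p * (F p (s + μ p) + F p (s - μ p)) := by
          rw [Finset.mul_sum]; exact Finset.sum_congr rfl (fun p _ => by ring)
        rw [this, hg s]; ring
end
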